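/- Suppose there exist ε, κ > 0 such that for all Z with dist(Z, 𝒲_G) ≤ ε one has dist(Z, 𝒲_G) ≤ κ‖∇G(Z)‖_F, where 𝒲_G = {(√λ₁W₁,...,√λ_LW_L) : (W₁,...,W_L) ∈ 𝒲_F}. Then for all W with dist(W, 𝒲_F) ≤ ε/√λ_max, one has dist(W, 𝒲_F) ≤ (κλ/λ_min)‖∇F(W)‖_F, where λ = Πλ_l, λ_min = min_l λ_l, λ_max = max_l λ_l. -/

import Mathlib

open Matrix

/-- Frobenius norm of a real matrix. -/
noncomputable def frob {m n : Type*} [Fintype m] [Fintype n] (A : Matrix m n ℝ) : ℝ :=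
  Real.sqrt (∑ i, ∑ j, (A i j) ^ 2)

/-- Spectral (operator ℓ²→ℓ²) norm of a real matrix. -/
noncomputable def spec {m n : Type*} [Fintype m] [Fintype n] [DecidableEq n] (A : Matrix m n ℝ) : ℝ :=
  ‖LinearMap.toContinuousLinearMap (Matrix.toEuclideanLin A)‖

/-- Reindexing cast of a rectangular matrix along equalities of dimensions. -/
def mcast {a b c e : ℕ} (h1 : a = c) (h2 : b = e) (M : Matrix (Fin a) (Fin b) ℝ) :
    Matrix (Fin c) (Fin e) ℝ :=
  Matrix.submatrix M (Fin.cast h1.symm) (Fin.cast h2.symm)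

/-- `chain d W i k = W_{i+k-1} * ⋯ * W_{i+1} * W_i` (so `k` consecutive factors starting
at layer `i`; the empty product is the identity). -/
noncomputable def chain (d : ℕ → ℕ) (W : ∀ l : ℕ, Matrix (Fin (d (l + 1))) (Fin (d l)) ℝ)
    (i : ℕ) : (k : ℕ) → Matrix (Fin (d (i + k))) (Fin (d i)) ℝ
  | 0 => (1 : Matrix (Fin (d i)) (Fin (d i)) ℝ)
  | k + 1 => W (i + k) * chain d W i k

/-- The gradient with respect to the `j`-th weight (0-based) of the loss
`‖W_{L:1} − c·Y‖_F² + ∑_l reg_l ‖W_l‖_F²`, namely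
`2·W_{L:j+2}ᵀ (W_{L:1} − c Y) W_{j:1}ᵀ + 2 reg_j W_j`. -/
noncomputable def gradReg (d : ℕ → ℕ) (L : ℕ)
    (W : ∀ l : ℕ, Matrix (Fin (d (l + 1))) (Fin (d l)) ℝ)
    (reg : ℕ → ℝ) (c : ℝ) (Y : Matrix (Fin (d L)) (Fin (d 0)) ℝ)
    (j : ℕ) (hj : j < L) : Matrix (Fin (d (j + 1))) (Fin (d j)) ℝ :=
  (2 : ℝ) • ((mcast (congrArg d (by omega : j + 1 + (L - 1 - j) = L)) rfl
      (chain d W (j + 1) (L - 1 - j)))ᵀ *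
    (mcast (congrArg d (Nat.zero_add L)) rfl (chain d W 0 L) - c • Y) *
    (mcast (congrArg d (Nat.zero_add j)) rfl (chain d W 0 j))ᵀ) + (2 * reg j) • W j

/-- Frobenius norm of the full gradient of the loss above. -/
noncomputable def gradNorm (d : ℕ → ℕ) (L : ℕ)
    (W : ∀ l : ℕ, Matrix (Fin (d (l + 1))) (Fin (d l)) ℝ)
    (reg : ℕ → ℝ) (c : ℝ) (Y : Matrix (Fin (d L)) (Fin (d 0)) ℝ) : ℝ :=
  Real.sqrt (∑ j : Fin L, (frob (gradReg d L W reg c Y j j.isLt)) ^ 2)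

/-- Euclidean (Frobenius) distance from a tuple of weight matrices to a set of such tuples,
measured over the first `L` layers. -/
noncomputable def tdist (d : ℕ → ℕ) (L : ℕ)
    (W : ∀ l : ℕ, Matrix (Fin (d (l + 1))) (Fin (d l)) ℝ)
    (S : Set (∀ l : ℕ, Matrix (Fin (d (l + 1))) (Fin (d l)) ℝ)) : ℝ :=
  sInf {r : ℝ | ∃ V ∈ S, r = Real.sqrt (∑ j : Fin L, (frob (W j - V j)) ^ 2)}

lemma mcast_smul {a b c e : ℕ} (h1 : a = c) (h2 : b = e) (r : ℝ)
    (M : Matrix (Fin a) (Fin b) ℝ) : mcast h1 h2 (r • M) = r • mcast h1 h2 M := rfl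

lemma chain_smul (d : ℕ → ℕ) (W : ∀ l : ℕ, Matrix (Fin (d (l+1))) (Fin (d l)) ℝ)
    (c : ℕ → ℝ) (i k : ℕ) :
    chain d (fun l => c l • W l) i k = (∏ l ∈ Finset.Ico i (i+k), c l) • chain d W i k := by
  induction k with
  | zero => simp [chain]
  | succ k ih =>
    have hprod : (∏ l ∈ Finset.Ico i (i+(k+1)), c l)
        = (∏ l ∈ Finset.Ico i (i+k), c l) * c (i+k) :=
      Finset.prod_Ico_succ_top (Nat.le_add_right i k) c
    show (c (i+k) • W (i+k)) * chain d (fun l => c l • W l) i k = _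
    rw [ih, hprod]
    show _ = ((∏ l ∈ Finset.Ico i (i+k), c l) * c (i+k)) • (W (i+k) * chain d W i k)
    rw [Matrix.smul_mul, Matrix.mul_smul, smul_smul, mul_comm]

lemma frob_nonneg {m n : Type*} [Fintype m] [Fintype n] (A : Matrix m n ℝ) : 0 ≤ frob A :=
  Real.sqrt_nonneg _

lemma frob_smul {m n : Type*} [Fintype m] [Fintype n] (r : ℝ) (hr : 0 ≤ r) (A : Matrix m n ℝ) :
    frob (r • A) = r * frob A := by
  unfold frob
  have h : ∑ i, ∑ j, ((r • A) i j)^2 = r^2 * ∑ i, ∑ j, (A i j)^2 := by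
    simp [Matrix.smul_apply, smul_eq_mul, mul_pow, Finset.mul_sum]
  rw [h, Real.sqrt_mul (sq_nonneg r), Real.sqrt_sq hr]

lemma prod_sqrt (s : Finset ℕ) (f : ℕ → ℝ) (hf : ∀ l ∈ s, 0 ≤ f l) :
    Real.sqrt (∏ l ∈ s, f l) = ∏ l ∈ s, Real.sqrt (f l) := by
  induction s using Finset.cons_induction with
  | empty => simp
  | cons a s ha ih =>
    rw [Finset.prod_cons, Finset.prod_cons,
      Real.sqrt_mul (hf a (Finset.mem_cons_self a s)),
      ih (fun l hl => hf l (Finset.mem_cons.mpr (Or.inr hl)))]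

lemma gradReg_scale (d : ℕ → ℕ) (L : ℕ) (lam : ℕ → ℝ) (hlam : ∀ l, 0 < lam l)
    (W : ∀ l : ℕ, Matrix (Fin (d (l + 1))) (Fin (d l)) ℝ)
    (Y : Matrix (Fin (d L)) (Fin (d 0)) ℝ) (lamP : ℝ)
    (hP : lamP = ∏ l ∈ Finset.range L, lam l) (j : ℕ) (hj : j < L) :
    gradReg d L (fun l => Real.sqrt (lam l) • W l) (fun _ => lamP) (Real.sqrt lamP) Y j hj
      = (lamP / Real.sqrt (lam j)) • gradReg d L W lam 1 Y j hj := by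
  have hsj : 0 < Real.sqrt (lam j) := Real.sqrt_pos.mpr (hlam j)
  have hlamP : 0 < lamP := hP ▸ Finset.prod_pos (fun l _ => hlam l)
  have hpL : (∏ l ∈ Finset.Ico 0 (0 + L), Real.sqrt (lam l)) = Real.sqrt lamP := by
    rw [hP, prod_sqrt _ _ (fun l _ => (hlam l).le)]
    congr 1
    rw [Nat.zero_add, Finset.range_eq_Ico]
  have hu : (∏ l ∈ Finset.Ico (j+1) (j+1+(L-1-j)), Real.sqrt (lam l))
      = ∏ l ∈ Finset.Ico (j+1) L, Real.sqrt (lam l) := by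
    rw [show j+1+(L-1-j) = L by omega]
  have hsplit : Real.sqrt lamP
      = (∏ l ∈ Finset.Ico 0 j, Real.sqrt (lam l)) *
        (Real.sqrt (lam j) * ∏ l ∈ Finset.Ico (j+1) L, Real.sqrt (lam l)) := by
    rw [← hpL, Nat.zero_add,
      ← Finset.prod_Ico_consecutive (fun l => Real.sqrt (lam l)) (Nat.zero_le j) hj.le,
      Finset.prod_eq_prod_Ico_succ_bot hj]
  have hss : Real.sqrt (lam j) * Real.sqrt (lam j) = lam j := Real.mul_self_sqrt (hlam j).le
  have hSS : Real.sqrt lamP * Real.sqrt lamP = lamP := Real.mul_self_sqrt hlamP.le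
  unfold gradReg
  rw [chain_smul, chain_smul, chain_smul, mcast_smul, mcast_smul, mcast_smul, hpL, hu,
    ← smul_sub]
  simp only [Matrix.transpose_smul, Matrix.smul_mul, Matrix.mul_smul, smul_smul, smul_add,
    one_smul, Nat.zero_add]
  have k1 : 2 * ((∏ l ∈ Finset.Ico 0 j, Real.sqrt (lam l)) *
        (Real.sqrt lamP * ∏ l ∈ Finset.Ico (j+1) L, Real.sqrt (lam l)))
      = lamP / Real.sqrt (lam j) * 2 := by
    rw [div_mul_eq_mul_div, eq_div_iff hsj.ne']
    linear_combination (-2 * Real.sqrt lamP) * hsplit + 2 * hSS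
  have k2 : 2 * lamP * Real.sqrt (lam j) = lamP / Real.sqrt (lam j) * (2 * lam j) := by
    rw [div_mul_eq_mul_div, eq_div_iff hsj.ne']
    linear_combination 2 * lamP * hss
  rw [k1, k2]

lemma gradNorm_scale (d : ℕ → ℕ) (L : ℕ) (lam : ℕ → ℝ) (hlam : ∀ l, 0 < lam l)
    (W : ∀ l : ℕ, Matrix (Fin (d (l + 1))) (Fin (d l)) ℝ)
    (Y : Matrix (Fin (d L)) (Fin (d 0)) ℝ) (lamP lamMin : ℝ)
    (hP : lamP = ∏ l ∈ Finset.range L, lam l) (hlamMin : 0 < lamMin)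
    (hMinle : ∀ j, j < L → lamMin ≤ lam j) :
    gradNorm d L (fun l => Real.sqrt (lam l) • W l) (fun _ => lamP) (Real.sqrt lamP) Y
      ≤ (lamP / Real.sqrt lamMin) * gradNorm d L W lam 1 Y := by
  have hlamP : 0 < lamP := hP ▸ Finset.prod_pos (fun l _ => hlam l)
  have hsMin : 0 < Real.sqrt lamMin := Real.sqrt_pos.mpr hlamMin
  have hc : 0 ≤ lamP / Real.sqrt lamMin := (div_pos hlamP hsMin).le
  unfold gradNorm
  have hterm : ∀ j : Fin L,
      (frob (gradReg d L (fun l => Real.sqrt (lam l) • W l) (fun _ => lamP)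
        (Real.sqrt lamP) Y j j.isLt))^2
        ≤ (lamP / Real.sqrt lamMin)^2 * (frob (gradReg d L W lam 1 Y j j.isLt))^2 := by
    intro j
    rw [gradReg_scale d L lam hlam W Y lamP hP j j.isLt,
      frob_smul _ (div_nonneg hlamP.le (Real.sqrt_nonneg _)) _, mul_pow]
    apply mul_le_mul_of_nonneg_right _ (sq_nonneg _)
    have hd : lamP / Real.sqrt (lam j) ≤ lamP / Real.sqrt lamMin := by
      gcongr
      exact hMinle j j.isLt
    exact pow_le_pow_left₀ (div_nonneg hlamP.le (Real.sqrt_nonneg _)) hd 2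
  calc Real.sqrt (∑ j : Fin L, (frob (gradReg d L (fun l => Real.sqrt (lam l) • W l)
        (fun _ => lamP) (Real.sqrt lamP) Y j j.isLt))^2)
      ≤ Real.sqrt (∑ j : Fin L,
          (lamP / Real.sqrt lamMin)^2 * (frob (gradReg d L W lam 1 Y j j.isLt))^2) :=
        Real.sqrt_le_sqrt (Finset.sum_le_sum fun j _ => hterm j)
    _ = (lamP / Real.sqrt lamMin) *
        Real.sqrt (∑ j : Fin L, (frob (gradReg d L W lam 1 Y j j.isLt))^2) := by
        rw [← Finset.mul_sum, Real.sqrt_mul (sq_nonneg _), Real.sqrt_sq hc]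

/-- if an error bound holds near the critical set `𝒲_G` of
`G(W) = ‖W_{L:1} − √λY‖² + λ∑‖W_l‖²`, where
`𝒲_G = {(√λ₁W₁,…,√λ_LW_L) : W ∈ 𝒲_F}` and `𝒲_F` is the critical set of
`F(W) = ‖W_{L:1} − Y‖² + ∑λ_l‖W_l‖²`, then for every `W` with
`dist(W,𝒲_F) ≤ ε/√λ_max` one has `dist(W,𝒲_F) ≤ (κλ/λ_min)‖∇F(W)‖_F`. -/
theorem stmt8 (L : ℕ) (hL : 2 ≤ L) (d : ℕ → ℕ) (lam : ℕ → ℝ) (hlam : ∀ l, 0 < lam l)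
    (Y : Matrix (Fin (d L)) (Fin (d 0)) ℝ)
    (lamP lamMin lamMax : ℝ)
    (hP : lamP = ∏ l ∈ Finset.range L, lam l)
    (hMin : lamMin = (Finset.range L).inf' (Finset.nonempty_range_iff.mpr (by omega)) lam)
    (hMax : lamMax = (Finset.range L).sup' (Finset.nonempty_range_iff.mpr (by omega)) lam)
    (WF WG : Set (∀ l : ℕ, Matrix (Fin (d (l + 1))) (Fin (d l)) ℝ))
    (hWF : WF = {V | ∀ (j : ℕ) (hj : j < L), gradReg d L V lam 1 Y j hj = 0})
    (hWG : WG = (fun (V : ∀ l : ℕ, Matrix (Fin (d (l + 1))) (Fin (d l)) ℝ) =>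
        (fun l => Real.sqrt (lam l) • V l)) '' WF)
    (ε κ : ℝ) (hε : 0 < ε) (hκ : 0 < κ)
    (hEB : ∀ Z, tdist d L Z WG ≤ ε →
      tdist d L Z WG ≤ κ * gradNorm d L Z (fun _ => lamP) (Real.sqrt lamP) Y) :
    ∀ W, tdist d L W WF ≤ ε / Real.sqrt lamMax →
      tdist d L W WF ≤ (κ * lamP / lamMin) * gradNorm d L W lam 1 Y := by
  intro W hW
  have hlamP : 0 < lamP := hP ▸ Finset.prod_pos (fun l _ => hlam l)
  have hlamMin : 0 < lamMin := by
    rw [hMin, Finset.lt_inf'_iff]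
    exact fun b _ => hlam b
  have hMinle : ∀ jj, jj < L → lamMin ≤ lam jj := by
    intro jj hjj; rw [hMin]; exact Finset.inf'_le _ (Finset.mem_range.mpr hjj)
  have hMaxge : ∀ jj, jj < L → lam jj ≤ lamMax := by
    intro jj hjj; rw [hMax]; exact Finset.le_sup' _ (Finset.mem_range.mpr hjj)
  have hlamMax : 0 < lamMax := lt_of_lt_of_le (hlam 0) (hMaxge 0 (by omega))
  have hsMin : 0 < Real.sqrt lamMin := Real.sqrt_pos.mpr hlamMin
  have hsMax : 0 < Real.sqrt lamMax := Real.sqrt_pos.mpr hlamMax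
  have hgN : (0:ℝ) ≤ gradNorm d L W lam 1 Y := Real.sqrt_nonneg _
  by_cases hne : WF.Nonempty
  · have bdd : ∀ (X : ∀ l : ℕ, Matrix (Fin (d (l+1))) (Fin (d l)) ℝ)
        (S : Set (∀ l : ℕ, Matrix (Fin (d (l+1))) (Fin (d l)) ℝ)),
        BddBelow {r : ℝ | ∃ V ∈ S, r = Real.sqrt (∑ jj : Fin L, (frob (X jj - V jj))^2)} := by
      intro X S
      exact ⟨0, by rintro r ⟨V, hV, rfl⟩; exact Real.sqrt_nonneg _⟩
    have tdist_le : ∀ (X : ∀ l : ℕ, Matrix (Fin (d (l+1))) (Fin (d l)) ℝ)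
        (S : Set (∀ l : ℕ, Matrix (Fin (d (l+1))) (Fin (d l)) ℝ)) V, V ∈ S →
        tdist d L X S ≤ Real.sqrt (∑ jj : Fin L, (frob (X jj - V jj))^2) := by
      intro X S V hV
      exact csInf_le (bdd X S) ⟨V, hV, rfl⟩
    have le_tdist : ∀ (X : ∀ l : ℕ, Matrix (Fin (d (l+1))) (Fin (d l)) ℝ)
        (S : Set (∀ l : ℕ, Matrix (Fin (d (l+1))) (Fin (d l)) ℝ)), S.Nonempty → ∀ a : ℝ,
        (∀ V ∈ S, a ≤ Real.sqrt (∑ jj : Fin L, (frob (X jj - V jj))^2)) →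
        a ≤ tdist d L X S := by
      intro X S hS a ha
      refine le_csInf ?_ ?_
      · obtain ⟨V, hV⟩ := hS; exact ⟨_, V, hV, rfl⟩
      · rintro r ⟨V, hV, rfl⟩; exact ha V hV
    have hsum : ∀ V : (∀ l : ℕ, Matrix (Fin (d (l+1))) (Fin (d l)) ℝ),
        (∑ jj : Fin L, (frob ((fun l => Real.sqrt (lam l) • W l) jj
            - (fun l => Real.sqrt (lam l) • V l) jj))^2)
          = ∑ jj : Fin L, lam jj * (frob (W jj - V jj))^2 := by
      intro V
      refine Finset.sum_congr rfl fun jj _ => ?_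
      show (frob (Real.sqrt (lam jj) • W jj - Real.sqrt (lam jj) • V jj))^2 = _
      rw [← smul_sub, frob_smul _ (Real.sqrt_nonneg _), mul_pow, Real.sq_sqrt (hlam jj).le]
    obtain ⟨V₀, hV₀⟩ := hne
    have hWGne : WG.Nonempty := by
      rw [hWG]; exact ⟨_, V₀, hV₀, rfl⟩
    have h2 : Real.sqrt lamMin * tdist d L W WF
        ≤ tdist d L (fun l => Real.sqrt (lam l) • W l) WG := by
      apply le_tdist _ WG hWGne
      intro V' hV'
      rw [hWG] at hV'
      obtain ⟨V, hV, rfl⟩ := hV'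
      calc Real.sqrt lamMin * tdist d L W WF
          ≤ Real.sqrt lamMin * Real.sqrt (∑ jj : Fin L, (frob (W jj - V jj))^2) :=
            mul_le_mul_of_nonneg_left (tdist_le W WF V hV) (Real.sqrt_nonneg _)
        _ = Real.sqrt (lamMin * ∑ jj : Fin L, (frob (W jj - V jj))^2) :=
            (Real.sqrt_mul hlamMin.le _).symm
        _ ≤ Real.sqrt (∑ jj : Fin L, lam jj * (frob (W jj - V jj))^2) := by
            apply Real.sqrt_le_sqrt
            rw [Finset.mul_sum]
            exact Finset.sum_le_sum fun jj _ =>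
              mul_le_mul_of_nonneg_right (hMinle jj jj.isLt) (sq_nonneg _)
        _ = Real.sqrt (∑ jj : Fin L, (frob ((fun l => Real.sqrt (lam l) • W l) jj
            - (fun l => Real.sqrt (lam l) • V l) jj))^2) := by
            rw [hsum V]
    have h1 : tdist d L (fun l => Real.sqrt (lam l) • W l) WG
        ≤ Real.sqrt lamMax * tdist d L W WF := by
      have step : tdist d L (fun l => Real.sqrt (lam l) • W l) WG / Real.sqrt lamMax
          ≤ tdist d L W WF := by
        apply le_tdist W WF ⟨V₀, hV₀⟩
        intro V hV
        rw [div_le_iff₀ hsMax]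
        calc tdist d L (fun l => Real.sqrt (lam l) • W l) WG
            ≤ Real.sqrt (∑ jj : Fin L, (frob ((fun l => Real.sqrt (lam l) • W l) jj
              - (fun l => Real.sqrt (lam l) • V l) jj))^2) :=
              tdist_le (fun l => Real.sqrt (lam l) • W l) WG
                (fun l => Real.sqrt (lam l) • V l) (by rw [hWG]; exact ⟨V, hV, rfl⟩)
          _ = Real.sqrt (∑ jj : Fin L, lam jj * (frob (W jj - V jj))^2) := by rw [hsum V]
          _ ≤ Real.sqrt (lamMax * ∑ jj : Fin L, (frob (W jj - V jj))^2) := by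
              apply Real.sqrt_le_sqrt
              rw [Finset.mul_sum]
              exact Finset.sum_le_sum fun jj _ =>
                mul_le_mul_of_nonneg_right (hMaxge jj jj.isLt) (sq_nonneg _)
          _ = Real.sqrt lamMax * Real.sqrt (∑ jj : Fin L, (frob (W jj - V jj))^2) :=
              Real.sqrt_mul hlamMax.le _
          _ = Real.sqrt (∑ jj : Fin L, (frob (W jj - V jj))^2) * Real.sqrt lamMax :=
              mul_comm _ _
      calc tdist d L (fun l => Real.sqrt (lam l) • W l) WG
          = tdist d L (fun l => Real.sqrt (lam l) • W l) WG / Real.sqrt lamMax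
              * Real.sqrt lamMax := (div_mul_cancel₀ _ hsMax.ne').symm
        _ ≤ tdist d L W WF * Real.sqrt lamMax := mul_le_mul_of_nonneg_right step hsMax.le
        _ = Real.sqrt lamMax * tdist d L W WF := mul_comm _ _
    have h3 : tdist d L (fun l => Real.sqrt (lam l) • W l) WG ≤ ε := by
      refine h1.trans ?_
      calc Real.sqrt lamMax * tdist d L W WF
          ≤ Real.sqrt lamMax * (ε / Real.sqrt lamMax) :=
            mul_le_mul_of_nonneg_left hW hsMax.le
        _ = ε := by field_simp
    have h4 := hEB _ h3
    have h5 := gradNorm_scale d L lam hlam W Y lamP lamMin hP hlamMin hMinle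
    have e1 : Real.sqrt lamMin * Real.sqrt lamMin = lamMin := Real.mul_self_sqrt hlamMin.le
    have c1 : Real.sqrt lamMin * (Real.sqrt lamMin * tdist d L W WF)
        ≤ Real.sqrt lamMin * (κ * ((lamP / Real.sqrt lamMin) * gradNorm d L W lam 1 Y)) := by
      apply mul_le_mul_of_nonneg_left _ (Real.sqrt_nonneg _)
      exact h2.trans (h4.trans (mul_le_mul_of_nonneg_left h5 hκ.le))
    have c2 : Real.sqrt lamMin * (κ * ((lamP / Real.sqrt lamMin) * gradNorm d L W lam 1 Y))
        = κ * lamP * gradNorm d L W lam 1 Y := by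
      field_simp
    have h6 : tdist d L W WF * lamMin ≤ κ * lamP * gradNorm d L W lam 1 Y := by
      calc tdist d L W WF * lamMin
          = Real.sqrt lamMin * (Real.sqrt lamMin * tdist d L W WF) := by
            linear_combination (-(tdist d L W WF)) * e1
        _ ≤ Real.sqrt lamMin * (κ * ((lamP / Real.sqrt lamMin) * gradNorm d L W lam 1 Y)) := c1
        _ = κ * lamP * gradNorm d L W lam 1 Y := c2
    rw [div_mul_eq_mul_div, le_div_iff₀ hlamMin]
    exact h6
  · have hempty : WF = ∅ := Set.not_nonempty_iff_eq_empty.mp hne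
    have h0 : tdist d L W WF = 0 := by
      simp [tdist, hempty, Real.sInf_empty]
    rw [h0]
    exact mul_nonneg (div_nonneg (mul_nonneg hκ.le hlamP.le) hlamMin.le) hgN
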